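/- Let P and Q be lattice paths from (0,0) to (m,r) with P never going above Q, and let M[P,Q] be the associated lattice path matroid (the transversal matroid on [m+r] with presentation (N_i = [l_i, u_i] : i ∈ [r])). Then the number of bases of M[P,Q] equals the number of lattice paths from (0,0) to (m,r) that go neither below P nor above Q. -/

import Mathlib

open Finset

/-- `B` is a transversal of the interval system `(N_j = [lo j, hi j])_{j : Fin r}`:
there is an injection `f : Fin r ↪ ℕ` with `lo j ≤ f j ≤ hi j` whose image is `B`. -/
def IsTransLH (r : ℕ) (lo hi : Fin r → ℕ) (B : Finset ℕ) : Prop :=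
  ∃ f : Fin r ↪ ℕ, (∀ j : Fin r, lo j ≤ f j ∧ f j ≤ hi j) ∧ Finset.univ.map f = B

lemma map_orderEmbOfFin {r : ℕ} (S : Finset ℕ) (h : S.card = r) :
    Finset.univ.map (S.orderEmbOfFin h).toEmbedding = S := by
  ext x
  simp only [Finset.mem_map, Finset.mem_univ, true_and, RelEmbedding.coe_toEmbedding]
  constructor
  · rintro ⟨i, rfl⟩; exact S.orderEmbOfFin_mem h i
  · intro hx
    have : x ∈ Set.range (S.orderEmbOfFin h) := by
      rw [Finset.range_orderEmbOfFin]; exact hx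
    exact this

lemma card_filter_emb {r : ℕ} (f : Fin r ↪ ℕ) {S : Finset ℕ} (hfS : Finset.univ.map f = S)
    (q : ℕ → Prop) [DecidablePred q] :
    (S.filter q).card = (Finset.univ.filter (fun i => q (f i))).card := by
  subst hfS
  rw [Finset.filter_map, Finset.card_map]
  rfl

lemma dominance {r : ℕ} (S T : Finset ℕ) (hS : S.card = r) (hT : T.card = r) :
    (∀ i : Fin r, S.orderEmbOfFin hS i ≤ T.orderEmbOfFin hT i) ↔
    ∀ p : ℕ, (T.filter (· ≤ p)).card ≤ (S.filter (· ≤ p)).card := by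
  constructor
  · intro h p
    rw [card_filter_emb _ (map_orderEmbOfFin S hS), card_filter_emb _ (map_orderEmbOfFin T hT)]
    apply Finset.card_le_card
    intro i hi
    simp only [Finset.mem_filter, Finset.mem_univ, true_and] at *
    exact le_trans (h i) hi
  · intro h i
    by_contra hc
    push_neg at hc
    set p := T.orderEmbOfFin hT i with hp
    have h1 : i.1 + 1 ≤ (T.filter (· ≤ p)).card := by
      rw [card_filter_emb _ (map_orderEmbOfFin T hT)]
      have hsub : Finset.Iic i ⊆ Finset.univ.filter (fun k => T.orderEmbOfFin hT k ≤ p) := by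
        intro k hk
        simp only [Finset.mem_Iic] at hk
        simp only [Finset.mem_filter, Finset.mem_univ, true_and]
        exact (T.orderEmbOfFin hT).monotone hk
      have := Finset.card_le_card hsub
      rwa [Fin.card_Iic] at this
    have h2 : (S.filter (· ≤ p)).card ≤ i.1 := by
      rw [card_filter_emb _ (map_orderEmbOfFin S hS)]
      have hsub : Finset.univ.filter (fun k => S.orderEmbOfFin hS k ≤ p) ⊆ Finset.Iio i := by
        intro k hk
        simp only [Finset.mem_filter, Finset.mem_univ, true_and] at hk
        simp only [Finset.mem_Iio]
        by_contra hki
        push_neg at hki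
        exact absurd (le_trans ((S.orderEmbOfFin hS).monotone hki) hk) (not_le.2 hc)
      have := Finset.card_le_card hsub
      rwa [Fin.card_Iio] at this
    have := h p
    omega

lemma trans_iff {r : ℕ} (lo hi : Fin r → ℕ) (hlo : StrictMono lo) (hhi : StrictMono hi)
    (B : Finset ℕ) (hB : B.card = r) :
    IsTransLH r lo hi B ↔
      ∀ i : Fin r, lo i ≤ B.orderEmbOfFin hB i ∧ B.orderEmbOfFin hB i ≤ hi i := by
  constructor
  · rintro ⟨f, hf, hfB⟩ i
    set b : Fin r → ℕ := fun k => B.orderEmbOfFin hB k with hbdef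
    constructor
    · by_contra hc
      push_neg at hc
      have h1 : (Finset.univ.filter (fun j => f j ≤ b i)).card = i.1 + 1 := by
        rw [← card_filter_emb f hfB (· ≤ b i),
          card_filter_emb _ (map_orderEmbOfFin B hB) (· ≤ b i)]
        have : (Finset.univ.filter (fun k : Fin r => (B.orderEmbOfFin hB).toEmbedding k ≤ b i)) =
            Finset.Iic i := by
          ext k
          simp only [Finset.mem_filter, Finset.mem_univ, true_and, Finset.mem_Iic,
            RelEmbedding.coe_toEmbedding, hbdef, (B.orderEmbOfFin hB).le_iff_le]
        rw [this, Fin.card_Iic]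
      have h2 : (Finset.univ.filter (fun j => f j ≤ b i)).card ≤ i.1 := by
        have hsub : Finset.univ.filter (fun j => f j ≤ b i) ⊆ Finset.Iio i := by
          intro j hj
          simp only [Finset.mem_filter, Finset.mem_univ, true_and] at hj
          simp only [Finset.mem_Iio]
          have : lo j < lo i := lt_of_le_of_lt (le_trans (hf j).1 hj) hc
          exact hlo.lt_iff_lt.1 this
        have := Finset.card_le_card hsub
        rwa [Fin.card_Iio] at this
      omega
    · by_contra hc
      push_neg at hc
      have h1 : (Finset.univ.filter (fun j => b i ≤ f j)).card = r - i.1 := by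
        rw [← card_filter_emb f hfB (b i ≤ ·),
          card_filter_emb _ (map_orderEmbOfFin B hB) (b i ≤ ·)]
        have : (Finset.univ.filter (fun k : Fin r => b i ≤ (B.orderEmbOfFin hB).toEmbedding k)) =
            Finset.Ici i := by
          ext k
          simp only [Finset.mem_filter, Finset.mem_univ, true_and, Finset.mem_Ici,
            RelEmbedding.coe_toEmbedding, hbdef, (B.orderEmbOfFin hB).le_iff_le]
        rw [this, Fin.card_Ici]
      have h2 : (Finset.univ.filter (fun j => b i ≤ f j)).card ≤ r - 1 - i.1 := by
        have hsub : Finset.univ.filter (fun j => b i ≤ f j) ⊆ Finset.Ioi i := by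
          intro j hj
          simp only [Finset.mem_filter, Finset.mem_univ, true_and] at hj
          simp only [Finset.mem_Ioi]
          have : hi i < hi j := lt_of_lt_of_le hc (le_trans hj (hf j).2)
          exact hhi.lt_iff_lt.1 this
        have := Finset.card_le_card hsub
        rwa [Fin.card_Ioi] at this
      have := i.2
      omega
  · intro h
    exact ⟨(B.orderEmbOfFin hB).toEmbedding, h, map_orderEmbOfFin B hB⟩

theorem stmt5 (m r : ℕ) (P Q : Finset ℕ)
    (hPs : P ⊆ Finset.Icc 1 (m + r)) (hQs : Q ⊆ Finset.Icc 1 (m + r))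
    (hP : P.card = r) (hQ : Q.card = r)
    (hPQ : ∀ p ≤ m + r, (P.filter (· ≤ p)).card ≤ (Q.filter (· ≤ p)).card) :
    Nat.card {B : Finset ℕ // B.card = r ∧
        IsTransLH r (fun i => (Q.orderIsoOfFin hQ i : ℕ)) (fun i => (P.orderIsoOfFin hP i : ℕ)) B}
      = Nat.card {B : Finset ℕ // B ⊆ Finset.Icc 1 (m + r) ∧ B.card = r ∧
          ∀ p ≤ m + r, (P.filter (· ≤ p)).card ≤ (B.filter (· ≤ p)).card ∧
            (B.filter (· ≤ p)).card ≤ (Q.filter (· ≤ p)).card} := by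
  apply Nat.card_congr
  apply Equiv.subtypeEquivRight
  intro B
  have hcoe : ∀ (S : Finset ℕ) (h : S.card = r) (i : Fin r),
      ((S.orderIsoOfFin h i : ℕ)) = S.orderEmbOfFin h i := fun S h i =>
    Finset.coe_orderIsoOfFin_apply S h i
  constructor
  · rintro ⟨hBr, ht⟩
    rw [show (fun i => (Q.orderIsoOfFin hQ i : ℕ)) = fun i => Q.orderEmbOfFin hQ i from
        funext (hcoe Q hQ),
      show (fun i => (P.orderIsoOfFin hP i : ℕ)) = fun i => P.orderEmbOfFin hP i from
        funext (hcoe P hP),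
      trans_iff _ _ (Q.orderEmbOfFin hQ).strictMono (P.orderEmbOfFin hP).strictMono B hBr] at ht
    have hlow : ∀ p : ℕ, (P.filter (· ≤ p)).card ≤ (B.filter (· ≤ p)).card :=
      (dominance B P hBr hP).1 (fun i => (ht i).2)
    have hhigh : ∀ p : ℕ, (B.filter (· ≤ p)).card ≤ (Q.filter (· ≤ p)).card :=
      (dominance Q B hQ hBr).1 (fun i => (ht i).1)
    refine ⟨?_, hBr, fun p _ => ⟨hlow p, hhigh p⟩⟩
    intro x hx
    rw [← map_orderEmbOfFin B hBr] at hx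
    simp only [Finset.mem_map, Finset.mem_univ, true_and, RelEmbedding.coe_toEmbedding] at hx
    obtain ⟨i, rfl⟩ := hx
    have h1 : Q.orderEmbOfFin hQ i ∈ Finset.Icc 1 (m + r) := hQs (Q.orderEmbOfFin_mem hQ i)
    have h2 : P.orderEmbOfFin hP i ∈ Finset.Icc 1 (m + r) := hPs (P.orderEmbOfFin_mem hP i)
    simp only [Finset.mem_Icc] at h1 h2 ⊢
    exact ⟨le_trans h1.1 (ht i).1, le_trans (ht i).2 h2.2⟩
  · rintro ⟨hBs, hBr, hcnt⟩
    refine ⟨hBr, ?_⟩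
    have hfull : ∀ (S : Finset ℕ), S ⊆ Finset.Icc 1 (m + r) → ∀ p : ℕ, m + r ≤ p →
        S.filter (· ≤ p) = S := by
      intro S hS p hp
      apply Finset.filter_true_of_mem
      intro x hx
      have := hS hx
      simp only [Finset.mem_Icc] at this
      omega
    have hlow : ∀ p : ℕ, (P.filter (· ≤ p)).card ≤ (B.filter (· ≤ p)).card := by
      intro p
      rcases le_or_gt p (m + r) with h | h
      · exact (hcnt p h).1
      · rw [hfull P hPs p h.le, hfull B hBs p h.le, hP, hBr]
    have hhigh : ∀ p : ℕ, (B.filter (· ≤ p)).card ≤ (Q.filter (· ≤ p)).card := by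
      intro p
      rcases le_or_gt p (m + r) with h | h
      · exact (hcnt p h).2
      · rw [hfull Q hQs p h.le, hfull B hBs p h.le, hQ, hBr]
    rw [show (fun i => (Q.orderIsoOfFin hQ i : ℕ)) = fun i => Q.orderEmbOfFin hQ i from
        funext (hcoe Q hQ),
      show (fun i => (P.orderIsoOfFin hP i : ℕ)) = fun i => P.orderEmbOfFin hP i from
        funext (hcoe P hP),
      trans_iff _ _ (Q.orderEmbOfFin hQ).strictMono (P.orderEmbOfFin hP).strictMono B hBr]
    intro i
    exact ⟨(dominance Q B hQ hBr).2 hhigh i, (dominance B P hBr hP).2 hlow i⟩
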